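/- Let α be a finite nonempty type and let G be a block-preserving subgroup of Perm(α × ℕ) such that the induced homomorphism G → Perm ℕ, g ↦ ḡ, is surjective. Then for every finite subset S of ℕ and every permutation τ of ℕ fixing every element of S, there exists g ∈ G such that g (a, i) = (a, i) for all a ∈ α and all i ∈ S, and such that ḡ = τ. (The fixator of finitely many blocks still induces the full symmetric group on the remaining blocks.) -/

import Mathlib

namespace FixAux
open Equiv

section ZModTool

variable {h : ℕ}

lemma zmod_h_val (hh : 0 < h) : ((h : ZMod (2*h))).val = h := by
  haveI : NeZero (2*h) := ⟨by omega⟩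
  exact ZMod.val_natCast_of_lt (by omega)

lemma zmod_hh (hh : 0 < h) : ((h : ZMod (2*h))) + (h : ZMod (2*h)) = 0 := by
  have : ((h : ZMod (2*h))) + (h : ZMod (2*h)) = ((2*h : ℕ) : ZMod (2*h)) := by
    push_cast; ring
  rw [this, ZMod.natCast_self]

lemma zmod_hne (hh : 0 < h) : (h : ZMod (2*h)) ≠ 0 := by
  intro hc
  have := zmod_h_val hh
  rw [hc] at this
  simp [ZMod.val_zero] at this
  omega

lemma zmod_add_h_eq_zero_iff (hh : 0 < h) (r : ZMod (2*h)) :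
    r + (h : ZMod (2*h)) = 0 ↔ r = (h : ZMod (2*h)) := by
  constructor
  · intro hc
    have := zmod_hh hh
    have : r + (h : ZMod (2*h)) = (h : ZMod (2*h)) + (h : ZMod (2*h)) := by rw [hc, this]
    exact add_right_cancel this
  · rintro rfl; exact zmod_hh hh

lemma zmod_val_add_h (hh : 0 < h) (r : ZMod (2*h)) :
    (r + (h : ZMod (2*h))).val = if r.val < h then r.val + h else r.val - h := by
  haveI : NeZero (2*h) := ⟨by omega⟩
  have hr : r.val < 2*h := ZMod.val_lt r
  rw [ZMod.val_add, zmod_h_val hh]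
  split
  · exact Nat.mod_eq_of_lt (by omega)
  · have : r.val + h = (r.val - h) + 1 * (2*h) := by omega
    rw [this, Nat.add_mul_mod_self_right]
    exact Nat.mod_eq_of_lt (by omega)

lemma zmod_lo_add_h (hh : 0 < h) (r : ZMod (2*h)) :
    (r + (h : ZMod (2*h))).val < h ↔ ¬ (r.val < h) := by
  haveI : NeZero (2*h) := ⟨by omega⟩
  have hr : r.val < 2*h := ZMod.val_lt r
  rw [zmod_val_add_h hh]
  split <;> omega

lemma zmod_eq_h_of_val (hh : 0 < h) (r : ZMod (2*h)) (hv : r.val = h) :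
    r = (h : ZMod (2*h)) := by
  haveI : NeZero (2*h) := ⟨by omega⟩
  have := ZMod.natCast_rightInverse (n := 2*h) r
  rw [← this, hv]

end ZModTool

-- continued: patterns
section Patterns

variable (h : ℕ)

def pa : ℤ × ZMod (2*h) → ℤ :=
  fun l => if 0 ≤ l.1 then (if l.2 = 0 then 1 else if l.2 = (h : ZMod (2*h)) then -1 else 0) else 0

def pg : ℤ × ZMod (2*h) → ℤ :=
  fun l => if 0 ≤ l.1 ∧ l.2 = 0 then 1 else 0

def pb : ℤ × ZMod (2*h) → ℤ :=
  fun l => if l.2 = 0 then (if 1 ≤ l.1 then -1 else 0)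
    else if l.2 = (h : ZMod (2*h)) then (if 0 ≤ l.1 then 1 else 0) else 0

def pd : ℤ × ZMod (2*h) → ℤ :=
  fun l => if l.1 = 0 ∧ l.2 = 0 then 1 else 0

variable {h}

lemma zmod_add_h_eq_h_iff (hh : 0 < h) (r : ZMod (2*h)) :
    r + (h : ZMod (2*h)) = (h : ZMod (2*h)) ↔ r = 0 := by
  constructor
  · intro hc
    have : r + (h : ZMod (2*h)) = 0 + (h : ZMod (2*h)) := by rw [hc, zero_add]
    exact add_right_cancel this
  · rintro rfl; rw [zero_add]

lemma pattern1 (hh : 0 < h) (l : ℤ × ZMod (2*h)) :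
    pg h l - pg h (l.1, l.2 + (h : ZMod (2*h))) = pa h l := by
  obtain ⟨q, r⟩ := l
  by_cases hr0 : r = 0
  · subst hr0
    simp only [pg, pa, zero_add]
    have h1 : ¬ ((h : ZMod (2*h)) = 0) := zmod_hne hh
    by_cases hq : 0 ≤ q <;> simp [hq, h1]
  · by_cases hrh : r = (h : ZMod (2*h))
    · subst hrh
      simp only [pg, pa, zmod_hh hh]
      have h1 : ¬ ((h : ZMod (2*h)) = 0) := zmod_hne hh
      by_cases hq : 0 ≤ q <;> simp [hq, h1]
    · have h2 : ¬ (r + (h : ZMod (2*h)) = 0) := by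
        rw [zmod_add_h_eq_zero_iff hh]; exact hrh
      simp [pg, pa, hr0, hrh, h2]

lemma pattern2 (hh : 0 < h) (l : ℤ × ZMod (2*h)) :
    pa h l + pb h l = pd h l := by
  obtain ⟨q, r⟩ := l
  by_cases hr0 : r = 0
  · subst hr0
    simp only [pa, pb, pd]
    have h1 : ¬ ((0 : ZMod (2*h)) = (h : ZMod (2*h))) := fun hc => zmod_hne hh hc.symm
    by_cases hq : 0 ≤ q
    · by_cases hq1 : 1 ≤ q
      · have : ¬ (q = 0) := by omega
        simp [hq, hq1, this]
      · have : q = 0 := by omega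
        simp [hq, hq1, this]
    · have : ¬ (q = 0) := by omega
      simp [hq, this, if_neg (by omega : ¬ (1:ℤ) ≤ q)]
  · by_cases hrh : r = (h : ZMod (2*h))
    · subst hrh
      have h1 : ¬ ((h : ZMod (2*h)) = 0) := zmod_hne hh
      simp only [pa, pb, pd, h1]
      by_cases hq : 0 ≤ q <;> simp [hq, h1]
    · simp [pa, pb, pd, hr0, hrh]

def vv (hh : 0 < h) : Equiv.Perm (ℤ × ZMod (2*h)) where
  toFun l := if l.2.val < h then (l.1, l.2 + (h : ZMod (2*h))) else (l.1 + 1, l.2 + (h : ZMod (2*h)))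
  invFun l := if l.2.val < h then (l.1 - 1, l.2 + (h : ZMod (2*h))) else (l.1, l.2 + (h : ZMod (2*h)))
  left_inv := by
    rintro ⟨q, r⟩
    by_cases hr : r.val < h
    · have h2 : ¬ ((r + (h : ZMod (2*h))).val < h) := by rw [zmod_lo_add_h hh]; simpa using hr
      simp only [hr, if_true, h2, if_false]
      rw [add_assoc, zmod_hh hh, add_zero]
    · have h2 : (r + (h : ZMod (2*h))).val < h := by rw [zmod_lo_add_h hh]; exact hr
      simp only [hr, if_false, h2, if_true]
      rw [add_assoc, zmod_hh hh, add_zero]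
      ring_nf
  right_inv := by
    rintro ⟨q, r⟩
    by_cases hr : r.val < h
    · have h2 : ¬ ((r + (h : ZMod (2*h))).val < h) := by rw [zmod_lo_add_h hh]; simpa using hr
      simp only [hr, if_true, h2, if_false]
      rw [add_assoc, zmod_hh hh, add_zero]
      ring_nf
    · have h2 : (r + (h : ZMod (2*h))).val < h := by rw [zmod_lo_add_h hh]; exact hr
      simp only [hr, if_false, h2, if_true]
      rw [add_assoc, zmod_hh hh, add_zero]

lemma pattern3 (hh : 0 < h) (l : ℤ × ZMod (2*h)) :
    pb h (vv hh l) = pa h l := by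
  obtain ⟨q, r⟩ := l
  by_cases hr0 : r = 0
  · subst hr0
    have hlo : (0 : ZMod (2*h)).val < h := by simpa [ZMod.val_zero] using hh
    have h1 : ¬ ((h : ZMod (2*h)) = 0) := zmod_hne hh
    simp only [vv, Equiv.coe_fn_mk, hlo, if_true, zero_add]
    simp [pa, pb, h1]
  · by_cases hrh : r = (h : ZMod (2*h))
    · subst hrh
      have hlo : ¬ ((h : ZMod (2*h)).val < h) := by rw [zmod_h_val hh]; omega
      simp only [vv, Equiv.coe_fn_mk, hlo, if_false, zmod_hh hh]
      simp only [pa, pb, if_pos rfl]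
      have h1 : ¬ ((h : ZMod (2*h)) = 0) := zmod_hne hh
      by_cases hq : 0 ≤ q
      · simp [h1, hq, if_pos (by omega : (1:ℤ) ≤ q + 1)]
      · simp [h1, hq, if_neg (by omega : ¬ (1:ℤ) ≤ q + 1)]
    · have h2 : ¬ (r + (h : ZMod (2*h)) = 0) := by rw [zmod_add_h_eq_zero_iff hh]; exact hrh
      have h3 : ¬ (r + (h : ZMod (2*h)) = (h : ZMod (2*h))) := by
        rw [zmod_add_h_eq_h_iff hh]; exact hr0
      by_cases hlo : r.val < h <;>
        simp [vv, pa, pb, hlo, hr0, hrh, h2, h3]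

end Patterns

section Swindle
variable {X : Type*}


def tw (π : Equiv.Perm X) {L : Type*} (w : L → ℤ) : Equiv.Perm (X × L) where
  toFun p := ((π ^ (w p.2)) p.1, p.2)
  invFun p := ((π ^ (-(w p.2))) p.1, p.2)
  left_inv p := by simp [← Equiv.Perm.mul_apply, ← zpow_add]
  right_inv p := by
    show (((π ^ (w p.2)) ((π ^ (-(w p.2))) p.1), p.2)) = p
    rw [← Equiv.Perm.mul_apply, ← zpow_add, add_neg_cancel, zpow_zero, Equiv.Perm.one_apply]

@[simp] lemma tw_apply (π : Equiv.Perm X) {L : Type*} (w : L → ℤ) (p : X × L) :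
    tw π w p = ((π ^ (w p.2)) p.1, p.2) := rfl

section Core

variable (h t : ℕ)

/-- the rotation in the `ZMod (2*h)` coordinate -/
def rr (X : Type*) (h : ℕ) : Equiv.Perm (X × (ℤ × ZMod (2*h))) :=
  (Equiv.refl X).prodCongr ((Equiv.refl ℤ).prodCongr (Equiv.addRight (1 : ZMod (2*h))))

lemma rr_pow (n : ℕ) (p : X × (ℤ × ZMod (2*h))) :
    ((rr X h) ^ n) p = (p.1, (p.2.1, p.2.2 + (n : ZMod (2*h)))) := by
  induction n with
  | zero => simp
  | succ k ih =>
      rw [pow_succ', Equiv.Perm.mul_apply, ih]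
      simp [rr, Equiv.addRight]
      push_cast
      ring

lemma rr_pow_M (hh : 0 < h) (p : X × (ℤ × ZMod (2*h))) :
    ((rr X h) ^ (h * (2*t+1))) p = (p.1, (p.2.1, p.2.2 + (h : ZMod (2*h)))) := by
  rw [rr_pow]
  congr 2
  have : ((h * (2*t+1) : ℕ) : ZMod (2*h)) = ((2*h : ℕ) : ZMod (2*h)) * (t : ZMod (2*h)) + (h : ZMod (2*h)) := by
    push_cast
    ring
  rw [this, ZMod.natCast_self, zero_mul, zero_add]

lemma tw_mul (π : Equiv.Perm X) {L : Type*} (w₁ w₂ : L → ℤ) :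
    tw π w₁ * tw π w₂ = tw π (fun l => w₁ l + w₂ l) := by
  apply Equiv.ext
  rintro ⟨x, l⟩
  simp [tw, Equiv.Perm.mul_apply, zpow_add]

lemma tw_inv (π : Equiv.Perm X) {L : Type*} (w : L → ℤ) :
    (tw π w)⁻¹ = tw π (fun l => -(w l)) := by
  apply Equiv.ext
  rintro ⟨x, l⟩
  rfl

/-- lift of a level permutation -/
def lup (X : Type*) {L : Type*} (v : Equiv.Perm L) : Equiv.Perm (X × L) :=
  (Equiv.refl X).prodCongr v

@[simp] lemma lup_apply {L : Type*} (v : Equiv.Perm L) (p : X × L) :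
    lup X v p = (p.1, v p.2) := rfl

lemma lup_inv {L : Type*} (v : Equiv.Perm L) : (lup X v)⁻¹ = lup X v⁻¹ := by
  apply Equiv.ext; rintro ⟨x, l⟩; rfl

lemma swindle (π : Equiv.Perm X) (hh : 0 < h) :
    ∃ ρ₁ ρ₂ ρ₃ ρ₄ : Equiv.Perm (X × (ℤ × ZMod (2*h))),
      ρ₁ ^ (h*(2*t+1)) * ρ₂ ^ (h*(2*t+1)) * ρ₃ ^ (h*(2*t+1)) * ρ₄ ^ (h*(2*t+1))
        = tw π (pd h) := by
  have conjpow : ∀ (u z : Equiv.Perm (X × (ℤ × ZMod (2*h)))) (n : ℕ),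
      (u * z * u⁻¹) ^ n = u * z ^ n * u⁻¹ := fun u z n => conj_pow
  have step1 : (rr X h) ^ (h*(2*t+1)) *
      ((tw π (pg h))⁻¹ * rr X h * tw π (pg h)) ^ (h*(2*t+1)) = tw π (pa h) := by
    have e1 : ((tw π (pg h))⁻¹ * rr X h * tw π (pg h)) ^ (h*(2*t+1))
        = (tw π (pg h))⁻¹ * (rr X h) ^ (h*(2*t+1)) * tw π (pg h) := by
      have := conjpow (tw π (pg h))⁻¹ (rr X h) (h*(2*t+1))
      rwa [inv_inv] at this
    rw [e1]
    apply Equiv.ext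
    rintro ⟨x, q, r⟩
    simp only [Equiv.Perm.mul_apply, tw_inv, tw_apply, rr_pow_M h t hh]
    have e2 : r + (h : ZMod (2*h)) + (h : ZMod (2*h)) = r := by
      rw [add_assoc, zmod_hh hh, add_zero]
    rw [e2]
    congr 1
    rw [← Equiv.Perm.mul_apply, ← zpow_add]
    have := pattern1 hh (q, r)
    simp only at this
    have e4 : -pg h (q, r + (h : ZMod (2*h))) + pg h (q, r) = pa h (q, r) := by omega
    rw [e4]
  have step2 : lup X (vv hh) * tw π (pa h) * (lup X (vv hh))⁻¹ = tw π (pb h) := by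
    apply Equiv.ext
    rintro ⟨x, l⟩
    rw [lup_inv]
    simp only [Equiv.Perm.mul_apply, lup_apply, tw_apply]
    have e3 : vv hh ((vv hh)⁻¹ l) = l := Equiv.apply_symm_apply _ _
    rw [e3]
    congr 2
    have := pattern3 hh ((vv hh)⁻¹ l)
    rw [e3] at this
    rw [this]
  have step3 : tw π (pa h) * tw π (pb h) = tw π (pd h) := by
    rw [tw_mul]
    congr 1
    funext l
    exact pattern2 hh l
  refine ⟨rr X h, (tw π (pg h))⁻¹ * rr X h * tw π (pg h),
    lup X (vv hh) * rr X h * (lup X (vv hh))⁻¹,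
    lup X (vv hh) * ((tw π (pg h))⁻¹ * rr X h * tw π (pg h)) * (lup X (vv hh))⁻¹, ?_⟩
  rw [conjpow (lup X (vv hh)) (rr X h) (h*(2*t+1)),
    conjpow (lup X (vv hh)) ((tw π (pg h))⁻¹ * rr X h * tw π (pg h)) (h*(2*t+1))]
  calc (rr X h) ^ (h*(2*t+1)) * ((tw π (pg h))⁻¹ * rr X h * tw π (pg h)) ^ (h*(2*t+1)) *
        (lup X (vv hh) * (rr X h) ^ (h*(2*t+1)) * (lup X (vv hh))⁻¹) *
        (lup X (vv hh) * ((tw π (pg h))⁻¹ * rr X h * tw π (pg h)) ^ (h*(2*t+1)) * (lup X (vv hh))⁻¹)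
      = ((rr X h) ^ (h*(2*t+1)) * ((tw π (pg h))⁻¹ * rr X h * tw π (pg h)) ^ (h*(2*t+1))) *
        (lup X (vv hh) * ((rr X h) ^ (h*(2*t+1)) * ((tw π (pg h))⁻¹ * rr X h * tw π (pg h)) ^ (h*(2*t+1))) * (lup X (vv hh))⁻¹) := by
        group
    _ = tw π (pa h) * (lup X (vv hh) * tw π (pa h) * (lup X (vv hh))⁻¹) := by rw [step1]
    _ = tw π (pa h) * tw π (pb h) := by rw [step2]
    _ = tw π (pd h) := step3


end Core
end Swindle
open Classical in
lemma split (π : Equiv.Perm ℕ) :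
    ∃ π₁ π₂ : Equiv.Perm ℕ, π = π₁ * π₂ ∧ {n | π₁ n = n}.Infinite ∧ {n | π₂ n = n}.Infinite := by
  by_cases hsupp : {n | π n ≠ n}.Infinite
  · -- infinite support case
    have hstep : ∀ bd : ℕ, ∃ n, π n ≠ n ∧ bd < n := by
      intro bd
      obtain ⟨n, hn, hn2⟩ := hsupp.exists_gt bd
      exact ⟨n, hn, hn2⟩
    -- B m bounds m and its images
    let B : ℕ → ℕ := fun m => max m (max (π m) (π.symm m))
    have hBself : ∀ m, m ≤ B m := fun m => le_max_left _ _
    have hBπ : ∀ m, π m ≤ B m := fun m => le_trans (le_max_left _ _) (le_max_right _ _)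
    have hBπs : ∀ m, π.symm m ≤ B m := fun m => le_trans (le_max_right _ _) (le_max_right _ _)
    let seq : ℕ → ℕ × ℕ := fun k => Nat.rec
      ((hstep 0).choose, B (hstep 0).choose)
      (fun _ p => ((hstep p.2).choose, max p.2 (B (hstep p.2).choose))) k
    let x : ℕ → ℕ := fun k => (seq k).1
    let b : ℕ → ℕ := fun k => (seq k).2
    have hxs : ∀ k, x (k+1) = (hstep (b k)).choose := fun k => rfl
    have hbs : ∀ k, b (k+1) = max (b k) (B (x (k+1))) := fun k => rfl
    have hxsupp : ∀ k, π (x k) ≠ x k := by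
      intro k
      cases k with
      | zero => exact (hstep 0).choose_spec.1
      | succ j => exact (hstep (b j)).choose_spec.1
    have hbx : ∀ k, B (x k) ≤ b k := by
      intro k
      cases k with
      | zero => exact le_rfl
      | succ j => rw [hbs]; exact le_max_right _ _
    have hmono : Monotone b := by
      apply monotone_nat_of_le_succ
      intro k
      rw [hbs]
      exact le_max_left _ _
    have hgt : ∀ k, b k < x (k+1) := fun k => (hstep (b k)).choose_spec.2
    have key : ∀ j k, j < k → B (x j) < x k := by
      intro j k hjk
      obtain ⟨d, rfl⟩ : ∃ d, k = (j+1) + d := ⟨k - (j+1), by omega⟩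
      calc B (x j) ≤ b j := hbx j
        _ ≤ b (j + d) := hmono (by omega)
        _ < x (j + d + 1) := hgt _
        _ = x (j + 1 + d) := by ring_nf
    have hxmono : StrictMono x := by
      apply strictMono_nat_of_lt_succ
      intro k
      calc x k ≤ B (x k) := hBself _
        _ < x (k+1) := key k (k+1) (by omega)
    have hxinj : ∀ i j : ℕ, x i = x j → i = j := by
      intro i j hij
      rcases lt_trichotomy i j with hl | he | hg
      · have := hxmono hl; omega
      · exact he
      · have := hxmono hg; omega
    -- the even subsequence as a set
    let u : ℕ → ℕ := fun k => x (2*k)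
    have hu0 : ∀ k, u k = x (2*k) := fun _ => rfl
    have huinj : Function.Injective u := by
      intro a c hac
      have := hxinj (2*a) (2*c) (show x (2*a) = x (2*c) from hac)
      omega
    have hD : ∀ j k, x (2*j) ≠ π.symm (x (2*k)) := by
      intro j k hc
      rcases lt_trichotomy (2*j) (2*k) with hlt | heq | hgt'
      · have h1 : π (x (2*j)) = x (2*k) := by rw [hc, Equiv.apply_symm_apply]
        have h2 : π (x (2*j)) ≤ B (x (2*j)) := hBπ _
        have h3 : B (x (2*j)) < x (2*k) := key _ _ hlt
        omega
      · have hjk : j = k := by omega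
        subst hjk
        have h5 : π (x (2*j)) = π (π.symm (x (2*j))) := congrArg π hc
        rw [Equiv.apply_symm_apply] at h5
        exact hxsupp (2*j) h5
      · have h2 : π.symm (x (2*k)) ≤ B (x (2*k)) := hBπs _
        have h3 : B (x (2*k)) < x (2*j) := key _ _ hgt'
        omega
    let f : ℕ → ℕ := fun n =>
      if n ∈ Set.range u then π.symm n else if π n ∈ Set.range u then π n else n
    have hf_u : ∀ k, f (u k) = π.symm (u k) := by
      intro k
      show (if _ then _ else _) = _
      rw [if_pos ⟨k, rfl⟩]
    have hf_su : ∀ k, f (π.symm (u k)) = u k := by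
      intro k
      show (if _ then _ else _) = _
      rw [if_neg, if_pos]
      · exact Equiv.apply_symm_apply _ _
      · rw [Equiv.apply_symm_apply]; exact ⟨k, rfl⟩
      · rintro ⟨j, hj⟩; exact hD j k hj
    have hf_other : ∀ n, n ∉ Set.range u → π n ∉ Set.range u → f n = n := by
      intro n h1 h2
      show (if _ then _ else _) = _
      rw [if_neg h1, if_neg h2]
    have hinv : Function.Involutive f := by
      intro n
      by_cases h1 : n ∈ Set.range u
      · obtain ⟨k, rfl⟩ := h1
        rw [hf_u, hf_su]
      · by_cases h2 : π n ∈ Set.range u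
        · have hfn : f n = π n := by
            show (if _ then _ else _) = _
            rw [if_neg h1, if_pos h2]
          obtain ⟨k, hk⟩ := h2
          rw [hfn, ← hk, hf_u, hk, Equiv.symm_apply_apply]
        · rw [hf_other n h1 h2, hf_other n h1 h2]
    let ν : Equiv.Perm ℕ := hinv.toPerm f
    have hνapp : ∀ n, ν n = f n := fun n => rfl
    have hνν : ν * ν = 1 := by
      apply Equiv.ext
      intro n
      simp only [Equiv.Perm.mul_apply, hνapp, Equiv.Perm.one_apply]
      exact hinv n
    refine ⟨π * ν, ν, ?_, ?_, ?_⟩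
    · rw [mul_assoc, hνν, mul_one]
    · apply (Set.infinite_range_of_injective huinj).mono
      rintro _ ⟨k, rfl⟩
      simp only [Set.mem_setOf_eq, Equiv.Perm.mul_apply, hνapp, hf_u]
      exact Equiv.apply_symm_apply _ _
    · have hvinj : Function.Injective (fun k : ℕ => x (2*k+1)) := by
        intro a c hac
        have := hxinj (2*a+1) (2*c+1) (show x (2*a+1) = x (2*c+1) from hac)
        omega
      apply (Set.infinite_range_of_injective hvinj).mono
      rintro _ ⟨k, rfl⟩
      simp only [Set.mem_setOf_eq, hνapp]
      apply hf_other
      · rintro ⟨j, hj⟩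
        have := hxinj (2*j) (2*k+1) (show x (2*j) = x (2*k+1) from hj)
        omega
      · rintro ⟨j, hj⟩
        have hj' : x (2*j) = π (x (2*k+1)) := hj
        rcases lt_trichotomy (2*j) (2*k+1) with hlt | heq | hgt'
        · have h4 : π.symm (x (2*j)) = x (2*k+1) := by rw [hj', Equiv.symm_apply_apply]
          have h2 : π.symm (x (2*j)) ≤ B (x (2*j)) := hBπs _
          have h3 : B (x (2*j)) < x (2*k+1) := key _ _ hlt
          omega
        · omega
        · have h2 : π (x (2*k+1)) ≤ B (x (2*k+1)) := hBπ _
          have h3 : B (x (2*k+1)) < x (2*j) := key _ _ hgt'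
          omega
  · -- finite support case
    have hfin : {n | π n ≠ n}.Finite := Set.not_infinite.mp hsupp
    refine ⟨π, 1, by rw [mul_one], ?_, ?_⟩
    · have := hfin.infinite_compl
      convert this using 1
      ext n
      simp
    · have : {n : ℕ | (1 : Equiv.Perm ℕ) n = n} = Set.univ := by
        ext n; simp
      rw [this]
      exact Set.infinite_univ

section Assemble

/-- `Equiv.permCongr` as a monoid hom. -/
def permCongrHom {b g : Type*} (e : b ≃ g) : Equiv.Perm b →* Equiv.Perm g where
  toFun σ := e.permCongr σ
  map_one' := by
    apply Equiv.ext; intro c; simp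
  map_mul' σ ν := by
    apply Equiv.ext; intro c
    simp [Equiv.permCongr_apply, Equiv.Perm.mul_apply]

@[simp] lemma permCongrHom_apply {b g : Type*} (e : b ≃ g) (σ : Equiv.Perm b) (c : g) :
    permCongrHom e σ c = e (σ (e.symm c)) := rfl

open Classical in
lemma four_powers (π : Equiv.Perm ℕ) (hfix : {n | π n = n}.Infinite) (M : ℕ) (hM : 0 < M) :
    ∃ l : List (Equiv.Perm ℕ), (l.map (· ^ M)).prod = π := by
  by_cases hid : π = 1
  · exact ⟨[], by simp [hid]⟩
  -- 2-adic decomposition of M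
  have hM2 : ∃ h t : ℕ, 0 < h ∧ M = h * (2*t+1) := by
    refine ⟨2 ^ (M.factorization 2), (M / 2 ^ (M.factorization 2)) / 2, by positivity, ?_⟩
    have h1 : 2 ^ (M.factorization 2) * (M / 2 ^ (M.factorization 2)) = M :=
      Nat.ordProj_mul_ordCompl_eq_self M 2
    have h2 : ¬ (2 ∣ M / 2 ^ (M.factorization 2)) :=
      Nat.not_dvd_ordCompl Nat.prime_two hM.ne'
    have h3 : M / 2 ^ (M.factorization 2) % 2 = 1 := by omega
    have h4 : 2 * ((M / 2 ^ (M.factorization 2)) / 2) + 1 = M / 2 ^ (M.factorization 2) := by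
      omega
    rw [h4]
    exact h1.symm
  obtain ⟨h, t, hh, hMht⟩ := hM2
  subst hMht
  -- the support and its permutation
  have hne : Nonempty {n : ℕ // π n ≠ n} := by
    by_contra hc
    apply hid
    apply Equiv.ext
    intro n
    by_contra hn
    exact hc ⟨⟨n, hn⟩⟩
  have hinvar : ∀ n, π (π n) ≠ π n ↔ π n ≠ n :=
    fun n => ⟨fun hn hc => hn (congrArg π hc), fun hn hc => hn (π.injective hc)⟩
  obtain ⟨ρ₁, ρ₂, ρ₃, ρ₄, hρ⟩ :=
    swindle (X := {n : ℕ // π n ≠ n}) h t (π.subtypePerm hinvar) hh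
  -- build the transport W
  haveI : NeZero (2*h) := ⟨by omega⟩
  haveI : Nonempty (ZMod (2*h)) := ⟨0⟩
  haveI hinfL : Infinite {l : ℤ × ZMod (2*h) // ¬ l = ((0:ℤ), (0:ZMod (2*h)))} := by
    have hfin : ({((0:ℤ), (0:ZMod (2*h)))} : Set (ℤ × ZMod (2*h))).Finite :=
      Set.finite_singleton _
    have h2 := hfin.infinite_compl
    have he : ({((0:ℤ), (0:ZMod (2*h)))} : Set (ℤ × ZMod (2*h)))ᶜ
        = {l : ℤ × ZMod (2*h) | ¬ l = ((0:ℤ), (0:ZMod (2*h)))} := by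
      ext l; simp
    rw [he] at h2
    exact h2.to_subtype
  haveI hinfF : Infinite {n : ℕ // ¬ π n ≠ n} := by
    have h2 : {n : ℕ | ¬ π n ≠ n}.Infinite := by simpa using hfix
    exact h2.to_subtype
  haveI hL0 : Unique {l : ℤ × ZMod (2*h) // l = ((0:ℤ), (0:ZMod (2*h)))} := by
    refine ⟨⟨⟨((0:ℤ), (0:ZMod (2*h))), rfl⟩⟩, ?_⟩
    rintro ⟨a, ha⟩
    exact Subtype.ext ha
  set eF : ({n : ℕ // π n ≠ n} × {l : ℤ × ZMod (2*h) // ¬ l = ((0:ℤ), (0:ZMod (2*h)))})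
      ≃ {n : ℕ // ¬ π n ≠ n} := Nonempty.some nonempty_equiv_of_countable with heF
  set W : ({n : ℕ // π n ≠ n} × (ℤ × ZMod (2*h))) ≃ ℕ :=
    (Equiv.prodCongr (Equiv.refl _) (Equiv.sumCompl
        (fun l : ℤ × ZMod (2*h) => l = ((0:ℤ), (0:ZMod (2*h))))).symm).trans
      ((Equiv.prodSumDistrib _ _ _).trans
        ((Equiv.sumCongr (Equiv.prodUnique _ _) eF).trans
          (Equiv.sumCompl (fun n : ℕ => π n ≠ n)))) with hW
  have hW1 : ∀ x : {n : ℕ // π n ≠ n}, W (x, ((0:ℤ), (0:ZMod (2*h)))) = ↑x := by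
    intro x
    rw [hW]
    simp only [Equiv.trans_apply, Equiv.prodCongr_apply, Equiv.coe_refl, Prod.map_apply, id_eq,
      Equiv.sumCongr_apply]
    rw [show (Equiv.sumCompl (fun l : ℤ × ZMod (2*h) => l = ((0:ℤ), (0:ZMod (2*h))))).symm
        ((0:ℤ), (0:ZMod (2*h))) = Sum.inl ⟨((0:ℤ), (0:ZMod (2*h))), rfl⟩ from
      Equiv.sumCompl_symm_apply_of_pos
        (p := fun l : ℤ × ZMod (2*h) => l = ((0:ℤ), (0:ZMod (2*h)))) rfl]
    rw [Equiv.prodSumDistrib_apply_left, Sum.map_inl, Equiv.sumCompl_apply_inl]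
    simp [Equiv.prodUnique_apply]
  have hW2 : ∀ (x : {n : ℕ // π n ≠ n}) (l : ℤ × ZMod (2*h)),
      ¬ l = ((0:ℤ), (0:ZMod (2*h))) → π (W (x, l)) = W (x, l) := by
    intro x l hl
    rw [hW]
    simp only [Equiv.trans_apply, Equiv.prodCongr_apply, Equiv.coe_refl, Prod.map_apply, id_eq,
      Equiv.sumCongr_apply]
    rw [show (Equiv.sumCompl (fun l : ℤ × ZMod (2*h) => l = ((0:ℤ), (0:ZMod (2*h))))).symm l
        = Sum.inr ⟨l, hl⟩ from Equiv.sumCompl_symm_apply_of_neg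
        (p := fun l : ℤ × ZMod (2*h) => l = ((0:ℤ), (0:ZMod (2*h)))) hl]
    rw [Equiv.prodSumDistrib_apply_right, Sum.map_inr, Equiv.sumCompl_apply_inr]
    have := (eF (x, ⟨l, hl⟩)).2
    simpa using this
  -- transport the swindle identity
  refine ⟨[permCongrHom W ρ₁, permCongrHom W ρ₂, permCongrHom W ρ₃, permCongrHom W ρ₄], ?_⟩
  have hρ' : ρ₁ ^ (h*(2*t+1)) * (ρ₂ ^ (h*(2*t+1)) * (ρ₃ ^ (h*(2*t+1)) * ρ₄ ^ (h*(2*t+1))))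
      = tw (π.subtypePerm hinvar) (pd h) := by
    rw [← hρ]; group
  simp only [List.map_cons, List.map_nil, List.prod_cons, List.prod_nil, mul_one]
  rw [← map_pow, ← map_pow, ← map_pow, ← map_pow, ← map_mul, ← map_mul, ← map_mul, hρ']
  -- final: the conjugated standard permutation is π
  apply Equiv.ext
  intro n
  rw [permCongrHom_apply]
  rcases hy : W.symm n with ⟨x, l⟩
  have hn : W (x, l) = n := by rw [← hy, Equiv.apply_symm_apply]
  by_cases hl : l = ((0:ℤ), (0:ZMod (2*h)))
  · subst hl
    have hpd : pd h ((0:ℤ), (0:ZMod (2*h))) = 1 := by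
      show (if _ then _ else _) = _
      rw [if_pos ⟨rfl, rfl⟩]
    rw [tw_apply]
    simp only [hpd, zpow_one]
    rw [← hn, hW1, hW1]
    simp [Equiv.Perm.subtypePerm_apply]
  · have hpd : pd h l = 0 := by
      show (if _ then _ else _) = _
      rw [if_neg]
      rintro ⟨h1, h2⟩
      exact hl (Prod.ext h1 h2)
    rw [tw_apply]
    simp only [hpd, zpow_zero, Equiv.Perm.one_apply]
    rw [hn, ← hn, hW2 x l hl, hn]
lemma all_powers (π : Equiv.Perm ℕ) (M : ℕ) (hM : 0 < M) :
    ∃ l : List (Equiv.Perm ℕ), (l.map (· ^ M)).prod = π := by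
  obtain ⟨π₁, π₂, hπ, h1, h2⟩ := split π
  obtain ⟨l₁, hl₁⟩ := four_powers π₁ h1 M hM
  obtain ⟨l₂, hl₂⟩ := four_powers π₂ h2 M hM
  exact ⟨l₁ ++ l₂, by rw [List.map_append, List.prod_append, hl₁, hl₂, hπ]⟩

open Classical in
lemma fixing_powers (S : Finset ℕ) (τ : Equiv.Perm ℕ) (hτ : ∀ i ∈ S, τ i = i)
    (M : ℕ) (hM : 0 < M) :
    ∃ l : List (Equiv.Perm ℕ), (∀ ρ ∈ l, ∀ i ∈ S, ρ i = i) ∧ (l.map (· ^ M)).prod = τ := by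
  have hτ' : ∀ i ∈ S, τ.symm i = i := by
    intro i hi
    conv_lhs => rw [← hτ i hi]
    rw [Equiv.symm_apply_apply]
  have hp : ∀ n, (τ n ∉ S) ↔ (n ∉ S) := by
    intro n
    constructor
    · intro hn hc
      rw [hτ n hc] at hn
      exact hn hc
    · intro hn hc
      have h3 := hτ' _ hc
      rw [Equiv.symm_apply_apply] at h3
      exact hn (h3 ▸ hc)
  haveI : Infinite {n : ℕ // n ∉ S} := by
    have h4 : (↑S : Set ℕ)ᶜ.Infinite := S.finite_toSet.infinite_compl
    have h5 : (↑S : Set ℕ)ᶜ = {n : ℕ | n ∉ S} := by ext n; simp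
    rw [h5] at h4
    exact h4.to_subtype
  set e : {n : ℕ // n ∉ S} ≃ ℕ := Nonempty.some nonempty_equiv_of_countable with he
  obtain ⟨l, hl⟩ := all_powers (permCongrHom e (τ.subtypePerm hp)) M hM
  set F : Equiv.Perm ℕ →* Equiv.Perm ℕ :=
    (Equiv.Perm.ofSubtype).comp (permCongrHom e.symm) with hF
  refine ⟨l.map F, ?_, ?_⟩
  · intro ρ hρ i hi
    obtain ⟨ρ', _, rfl⟩ := List.mem_map.mp hρ
    rw [hF]
    simp only [MonoidHom.comp_apply]
    apply Equiv.Perm.ofSubtype_apply_of_not_mem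
    simpa using hi
  · calc ((l.map F).map (· ^ M)).prod
        = ((l.map (· ^ M)).map F).prod := by
          rw [List.map_map, List.map_map]
          congr 1
          apply List.map_congr_left
          intro x _
          simp only [Function.comp_apply, map_pow]
      _ = F ((l.map (· ^ M)).prod) := (map_list_prod F _).symm
      _ = F (permCongrHom e (τ.subtypePerm hp)) := by rw [hl]
      _ = Equiv.Perm.ofSubtype (τ.subtypePerm hp) := by
          rw [hF]
          simp only [MonoidHom.comp_apply]
          congr 1
          apply Equiv.ext
          intro x
          simp [Equiv.permCongr_apply]
          rfl
      _ = τ := by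
          apply Equiv.ext
          intro n
          by_cases hn : n ∉ S
          · rw [Equiv.Perm.ofSubtype_apply_of_mem (τ.subtypePerm hp) hn]
            simp [Equiv.Perm.subtypePerm_apply]
          · rw [Equiv.Perm.ofSubtype_apply_of_not_mem (τ.subtypePerm hp) hn]
            rw [hτ n (not_not.mp hn)]

end Assemble

section MainParts
variable {α : Type*}

lemma pow_bar (g : Equiv.Perm (α × ℕ)) (ρ : Equiv.Perm ℕ)
    (hg : ∀ (a : α) (i : ℕ), (g (a, i)).2 = ρ i) (n : ℕ) :
    ∀ (a : α) (i : ℕ), ((g ^ n) (a, i)).2 = (ρ ^ n) i := by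
  induction n with
  | zero => intro a i; simp
  | succ k ih =>
    intro a i
    rw [pow_succ, Equiv.Perm.mul_apply, pow_succ, Equiv.Perm.mul_apply]
    have h1 : g (a, i) = ((g (a, i)).1, ρ i) := Prod.ext rfl (hg a i)
    rw [h1]
    exact ih _ _

lemma pow_fixes [Finite α] (g : Equiv.Perm (α × ℕ)) (ρ : Equiv.Perm ℕ)
    (hg : ∀ (a : α) (i : ℕ), (g (a, i)).2 = ρ i) (i : ℕ) (hi : ρ i = i) (a : α) :
    (g ^ Nat.card (Equiv.Perm α)) (a, i) = (a, i) := by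
  have hsec : ∀ b : α, (g (b, i)).2 = i := fun b => by rw [hg b i, hi]
  have hblock : ∀ b : α, g (b, i) = ((g (b, i)).1, i) := fun b => Prod.ext rfl (hsec b)
  have hinj : Function.Injective (fun b : α => (g (b, i)).1) := by
    intro b c hbc
    have h2 : g (b, i) = g (c, i) := by rw [hblock b, hblock c]; exact congrArg (·, i) hbc
    have h3 := g.injective h2
    exact (Prod.ext_iff.mp h3).1
  have hbij := Finite.injective_iff_bijective.mp hinj
  let φ : Equiv.Perm α := Equiv.ofBijective _ hbij
  have hφ : ∀ b, φ b = (g (b, i)).1 := fun b => rfl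
  have hpow : ∀ (n : ℕ) (b : α), (g ^ n) (b, i) = ((φ ^ n) b, i) := by
    intro n
    induction n with
    | zero => intro b; simp
    | succ k ih =>
      intro b
      rw [pow_succ, Equiv.Perm.mul_apply, pow_succ, Equiv.Perm.mul_apply]
      rw [hblock b, ← hφ b]
      exact ih (φ b)
  haveI : Finite (Equiv.Perm α) :=
    Finite.of_injective (fun g : Equiv.Perm α => (g : α → α)) DFunLike.coe_injective
  rw [hpow _ a, pow_card_eq_one']
  simp

end MainParts

end FixAux


/-- Let `α` be a finite nonempty type and `G ≤ Perm (α × ℕ)` a block-preserving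
group (each `g ∈ G` induces a permutation of the block indices) inducing the
full symmetric group on the set of blocks. Then for every finite set `S` of
block indices and every permutation `τ` of `ℕ` fixing `S` pointwise, some
`g ∈ G` fixes the blocks indexed by `S` pointwise and induces `τ` on the
blocks. -/
theorem fixator_acts_fully_on_remaining_blocks
    (α : Type*) [Finite α] [Nonempty α]
    (G : Subgroup (Equiv.Perm (α × ℕ)))
    (hbp : ∀ g ∈ G, ∃ σ : Equiv.Perm ℕ, ∀ (a : α) (i : ℕ), (g (a, i)).2 = σ i)
    (hsurj : ∀ τ : Equiv.Perm ℕ, ∃ g ∈ G, ∀ (a : α) (i : ℕ), (g (a, i)).2 = τ i) :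
    ∀ (S : Finset ℕ) (τ : Equiv.Perm ℕ), (∀ i ∈ S, τ i = i) →
      ∃ g ∈ G, (∀ (a : α), ∀ i ∈ S, g (a, i) = (a, i)) ∧
        ∀ (a : α) (i : ℕ), (g (a, i)).2 = τ i := by
  intro S τ hτ
  classical
  haveI : Finite (Equiv.Perm α) :=
    Finite.of_injective (fun g : Equiv.Perm α => (g : α → α)) DFunLike.coe_injective
  have hMpos : 0 < Nat.card (Equiv.Perm α) := Nat.card_pos
  obtain ⟨l, hfixl, hprod⟩ := FixAux.fixing_powers S τ hτ (Nat.card (Equiv.Perm α)) hMpos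
  suffices H : ∀ l : List (Equiv.Perm ℕ), (∀ ρ ∈ l, ∀ i ∈ S, ρ i = i) →
      ∃ g ∈ G, (∀ (a : α), ∀ i ∈ S, g (a, i) = (a, i)) ∧
        ∀ (a : α) (i : ℕ),
          (g (a, i)).2 = ((l.map (· ^ Nat.card (Equiv.Perm α))).prod) i by
    obtain ⟨g, hgG, hgfix, hgbar⟩ := H l hfixl
    exact ⟨g, hgG, hgfix, fun a i => by rw [hgbar a i, hprod]⟩
  clear hfixl hprod hτ
  intro l
  induction l with
  | nil =>
    intro _
    refine ⟨1, one_mem G, ?_, ?_⟩ <;> simp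
  | cons ρ l ih =>
    intro hfl
    obtain ⟨g', hg'G, hg'fix, hg'bar⟩ := ih (fun ρ' h' => hfl ρ' (List.mem_cons_of_mem _ h'))
    obtain ⟨g0, hg0G, hg0bar⟩ := hsurj ρ
    refine ⟨g0 ^ Nat.card (Equiv.Perm α) * g',
      mul_mem (pow_mem hg0G _) hg'G, ?_, ?_⟩
    · intro a i hi
      rw [Equiv.Perm.mul_apply, hg'fix a i hi]
      exact FixAux.pow_fixes g0 ρ hg0bar i (hfl ρ (List.mem_cons_self) i hi) a
    · intro a i
      rw [Equiv.Perm.mul_apply]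
      have h1 : g' (a, i) = ((g' (a, i)).1, ((l.map (· ^ Nat.card (Equiv.Perm α))).prod) i) :=
        Prod.ext rfl (hg'bar a i)
      rw [h1, FixAux.pow_bar g0 ρ hg0bar (Nat.card (Equiv.Perm α))]
      simp [Equiv.Perm.mul_apply]
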